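/- Fix ℓ ∈ ℕ₀ and complex numbers a_1, a_2, a_3 and b_{12}, b_{13}, b_{23} with a_1 ≠ 0. The linear map sending a family (ξ_i)_{i ∈ ℕ₀³, |i| = ℓ+2} of complex numbers to the family indexed by β ∈ ℕ₀³ with |β| = ℓ given by Σ_{k=1}^{3} (β_k+2)(β_k+1) a_k ξ_{β+2e_k} + Σ_{1≤k<k'≤3} (β_k+1)(β_{k'}+1) b_{kk'} ξ_{β+e_k+e_{k'}} is surjective onto ℂ^{(ℓ+1)(ℓ+2)/2}. -/

import Mathlib

/-- The standard unit multi-indices in ℕ₀³. -/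
def unitIdx (k : Fin 3) : Fin 3 → ℕ := fun j => if j = k then 1 else 0

/-- Recursive construction of a solution, solving for the index with largest first
coordinate (whose coefficient involves `a 0 ≠ 0`). -/
noncomputable def xiAux (a : Fin 3 → ℂ) (b12 b13 b23 : ℂ) (B : (Fin 3 → ℕ) → ℂ) :
    ℕ → ℕ → ℕ → ℂ
  | 0, _, _ => 0
  | 1, _, _ => 0
  | (n+2), p, q =>
      (B ![n, p, q]
        - ((((p + 2) * (p + 1) : ℕ) : ℂ) * a 1 * xiAux a b12 b13 b23 B n (p+2) q
          + (((q + 2) * (q + 1) : ℕ) : ℂ) * a 2 * xiAux a b12 b13 b23 B n p (q+2)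
          + (((n + 1) * (p + 1) : ℕ) : ℂ) * b12 * xiAux a b12 b13 b23 B (n+1) (p+1) q
          + (((n + 1) * (q + 1) : ℕ) : ℂ) * b13 * xiAux a b12 b13 b23 B (n+1) p (q+1)
          + (((p + 1) * (q + 1) : ℕ) : ℂ) * b23 * xiAux a b12 b13 b23 B n (p+1) (q+1)))
        / ((((n + 2) * (n + 1) : ℕ) : ℂ) * a 0)
  termination_by n _ _ => n

theorem stmt10 (ℓ : ℕ) (a : Fin 3 → ℂ) (b12 b13 b23 : ℂ) (ha : a 0 ≠ 0) :
    ∀ B : (Fin 3 → ℕ) → ℂ, ∃ ξ : (Fin 3 → ℕ) → ℂ,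
      ∀ β : Fin 3 → ℕ, β 0 + β 1 + β 2 = ℓ →
        (∑ k : Fin 3, (((β k + 2) * (β k + 1) : ℕ) : ℂ) * a k * ξ (β + unitIdx k + unitIdx k))
        + (((β 0 + 1) * (β 1 + 1) : ℕ) : ℂ) * b12 * ξ (β + unitIdx 0 + unitIdx 1)
        + (((β 0 + 1) * (β 2 + 1) : ℕ) : ℂ) * b13 * ξ (β + unitIdx 0 + unitIdx 2)
        + (((β 1 + 1) * (β 2 + 1) : ℕ) : ℂ) * b23 * ξ (β + unitIdx 1 + unitIdx 2)
        = B β := by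
  intro B
  refine ⟨fun γ => xiAux a b12 b13 b23 B (γ 0) (γ 1) (γ 2), ?_⟩
  intro β _
  have hβ : β = ![β 0, β 1, β 2] := by
    funext i; fin_cases i <;> rfl
  have hidx : ∀ k k' : Fin 3, ∀ j : Fin 3,
      (β + unitIdx k + unitIdx k') j = β j + unitIdx k j + unitIdx k' j := fun _ _ _ => rfl
  simp only [Fin.sum_univ_three, hidx, unitIdx, Fin.reduceEq, reduceIte, if_true, add_zero]
  have key : xiAux a b12 b13 b23 B (β 0 + 2) (β 1) (β 2)
      = (B ![β 0, β 1, β 2]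
        - ((((β 1 + 2) * (β 1 + 1) : ℕ) : ℂ) * a 1 * xiAux a b12 b13 b23 B (β 0) (β 1+2) (β 2)
          + (((β 2 + 2) * (β 2 + 1) : ℕ) : ℂ) * a 2 * xiAux a b12 b13 b23 B (β 0) (β 1) (β 2+2)
          + (((β 0 + 1) * (β 1 + 1) : ℕ) : ℂ) * b12 * xiAux a b12 b13 b23 B (β 0+1) (β 1+1) (β 2)
          + (((β 0 + 1) * (β 2 + 1) : ℕ) : ℂ) * b13 * xiAux a b12 b13 b23 B (β 0+1) (β 1) (β 2+1)
          + (((β 1 + 1) * (β 2 + 1) : ℕ) : ℂ) * b23 * xiAux a b12 b13 b23 B (β 0) (β 1+1) (β 2+1)))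
        / ((((β 0 + 2) * (β 0 + 1) : ℕ) : ℂ) * a 0) := by rw [xiAux]
  rw [← hβ] at key
  have hne : ((((β 0 + 2) * (β 0 + 1) : ℕ) : ℂ) * a 0) ≠ 0 := by
    apply mul_ne_zero _ ha
    exact Nat.cast_ne_zero.mpr (Nat.mul_ne_zero (by omega) (by omega))
  have e2 : ∀ m : ℕ, m + 1 + 1 = m + 2 := fun m => rfl
  simp only [e2]
  have key2 : ((((β 0 + 2) * (β 0 + 1) : ℕ) : ℂ) * a 0) * xiAux a b12 b13 b23 B (β 0 + 2) (β 1) (β 2)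
      = B β
        - ((((β 1 + 2) * (β 1 + 1) : ℕ) : ℂ) * a 1 * xiAux a b12 b13 b23 B (β 0) (β 1+2) (β 2)
          + (((β 2 + 2) * (β 2 + 1) : ℕ) : ℂ) * a 2 * xiAux a b12 b13 b23 B (β 0) (β 1) (β 2+2)
          + (((β 0 + 1) * (β 1 + 1) : ℕ) : ℂ) * b12 * xiAux a b12 b13 b23 B (β 0+1) (β 1+1) (β 2)
          + (((β 0 + 1) * (β 2 + 1) : ℕ) : ℂ) * b13 * xiAux a b12 b13 b23 B (β 0+1) (β 1) (β 2+1)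
          + (((β 1 + 1) * (β 2 + 1) : ℕ) : ℂ) * b23 * xiAux a b12 b13 b23 B (β 0) (β 1+1) (β 2+1)) := by
    rw [key, mul_div_cancel₀ _ hne]
  linear_combination key2
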